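/- The map π : Ẽ → E, π(x,y,u,v) = (x,y,yu,v), is proper: the preimage of any compact subset of E is compact. -/
import Mathlib


/-- `π : Ẽ → E`, `π(x,y,u,v) = (x,y,yu,v)`, is proper: the preimage in `Ẽ` of any
compact subset of `E` is compact. -/
theorem pi_proper :
    ∀ K : Set (ℂ × ℂ × ℂ × ℂ),
      K ⊆ {p : ℂ × ℂ × ℂ × ℂ |
            p.2.1 ^ 4 = p.1 ^ 4 - 1 ∧ p.2.2.1 ^ 4 = p.2.1 ^ 4 * (p.2.2.2 ^ 4 - 1)} →
      IsCompact K →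
      IsCompact
        ({p : ℂ × ℂ × ℂ × ℂ | p.2.1 ^ 4 = p.1 ^ 4 - 1 ∧ p.2.2.1 ^ 4 = p.2.2.2 ^ 4 - 1} ∩
          (fun p : ℂ × ℂ × ℂ × ℂ =>
            ((p.1, p.2.1, p.2.1 * p.2.2.1, p.2.2.2) : ℂ × ℂ × ℂ × ℂ)) ⁻¹' K) := by
  intro K hKsub hK
  set f : ℂ × ℂ × ℂ × ℂ → ℂ × ℂ × ℂ × ℂ :=
    fun p => (p.1, p.2.1, p.2.1 * p.2.2.1, p.2.2.2) with hf
  have hfc : Continuous f := by fun_prop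
  -- closedness
  have hclosed : IsClosed
      ({p : ℂ × ℂ × ℂ × ℂ | p.2.1 ^ 4 = p.1 ^ 4 - 1 ∧ p.2.2.1 ^ 4 = p.2.2.2 ^ 4 - 1} ∩
        f ⁻¹' K) := by
    apply IsClosed.inter
    · have : {p : ℂ × ℂ × ℂ × ℂ | p.2.1 ^ 4 = p.1 ^ 4 - 1 ∧ p.2.2.1 ^ 4 = p.2.2.2 ^ 4 - 1}
          = {p : ℂ × ℂ × ℂ × ℂ | p.2.1 ^ 4 = p.1 ^ 4 - 1}
            ∩ {p : ℂ × ℂ × ℂ × ℂ | p.2.2.1 ^ 4 = p.2.2.2 ^ 4 - 1} := by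
        ext p; simp [Set.mem_inter_iff]
      rw [this]
      exact (isClosed_eq (by fun_prop) (by fun_prop)).inter
        (isClosed_eq (by fun_prop) (by fun_prop))
    · exact hK.isClosed.preimage hfc
  -- boundedness
  obtain ⟨r, hr⟩ := hK.isBounded.subset_closedBall 0
  set R : ℝ := max r 0 with hR
  have hR0 : 0 ≤ R := le_max_right _ _
  have hsub : ({p : ℂ × ℂ × ℂ × ℂ | p.2.1 ^ 4 = p.1 ^ 4 - 1 ∧ p.2.2.1 ^ 4 = p.2.2.2 ^ 4 - 1} ∩
      f ⁻¹' K) ⊆ Metric.closedBall 0 (R + 1) := by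
    rintro ⟨x, y, u, v⟩ ⟨⟨h1, h2⟩, hpK⟩
    have hmem : f (x, y, u, v) ∈ Metric.closedBall (0 : ℂ × ℂ × ℂ × ℂ) r := hr hpK
    rw [Metric.mem_closedBall, dist_zero_right] at hmem
    have hnorm : max ‖x‖ (max ‖y‖ (max ‖y * u‖ ‖v‖)) ≤ r := by
      simpa [f, Prod.norm_def] using hmem
    have hx : ‖x‖ ≤ R := le_trans (le_max_left _ _) (hnorm.trans (le_max_left _ _))
    have hy : ‖y‖ ≤ R := le_trans (le_trans (le_max_left _ _) (le_max_right _ _))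
      (hnorm.trans (le_max_left _ _))
    have hv : ‖v‖ ≤ R := by
      have : ‖v‖ ≤ max ‖x‖ (max ‖y‖ (max ‖y * u‖ ‖v‖)) := by
        exact le_max_of_le_right (le_max_of_le_right (le_max_right _ _))
      exact le_trans this (hnorm.trans (le_max_left _ _))
    have hu : ‖u‖ ≤ R + 1 := by
      have h4 : ‖u‖ ^ 4 ≤ (R + 1) ^ 4 := by
        have : ‖u‖ ^ 4 = ‖v ^ 4 - 1‖ := by
          rw [← norm_pow, h2]
        rw [this]
        calc ‖v ^ 4 - 1‖ ≤ ‖v ^ 4‖ + ‖(1 : ℂ)‖ := norm_sub_le _ _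
          _ = ‖v‖ ^ 4 + 1 := by rw [norm_pow, norm_one]
          _ ≤ R ^ 4 + 1 := by gcongr
          _ ≤ (R + 1) ^ 4 := by nlinarith [hR0, sq_nonneg R, pow_nonneg hR0 3]
      exact le_of_pow_le_pow_left₀ (by norm_num) (by positivity) h4
    rw [Metric.mem_closedBall, dist_zero_right]
    have : ‖((x, y, u, v) : ℂ × ℂ × ℂ × ℂ)‖ = max ‖x‖ (max ‖y‖ (max ‖u‖ ‖v‖)) := by
      simp [Prod.norm_def]
    rw [this]
    have h1' : ‖x‖ ≤ R + 1 := hx.trans (by linarith)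
    have h2' : ‖y‖ ≤ R + 1 := hy.trans (by linarith)
    have h3' : ‖v‖ ≤ R + 1 := hv.trans (by linarith)
    simp only [max_le_iff]
    exact ⟨h1', h2', hu, h3'⟩
  exact (Metric.isCompact_of_isClosed_isBounded hclosed
    (Metric.isBounded_closedBall.subset hsub))
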